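/- Let g(λ) ∈ C[λ] satisfy (pλ+(k+2p)μ)g(λ) − (pμ+(k+2p)λ)g(μ) = p(λ−μ)g(λ+μ) identically in λ, μ, where p ∈ ℂ is nonzero and k ∈ ℤ≥0. Then g(λ) = g₀δ_{k,−2p} + g₁λ + g₂δ_{k,−p}λ² + g₃δ_{k,0}λ³ for some constants g₀, g₁, g₂, g₃ ∈ ℂ; in particular deg g ≤ 3, and if k ∉ {0, −p, −2p} then g is linear with zero constant term. -/

import Mathlib

open Polynomial


private lemma compCoeff0 (g : ℂ[X]) (lam : ℂ) :
    (g.comp (C lam + X)).coeff 0 = g.eval lam := by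
  rw [coeff_zero_eq_eval_zero]; simp [eval_comp]

private lemma compCoeff1 (g : ℂ[X]) (lam : ℂ) :
    (g.comp (C lam + X)).coeff 1 = (derivative g).eval lam := by
  have h1 : (derivative (g.comp (C lam + X))).coeff 0 = (g.comp (C lam + X)).coeff 1 * 1 := by
    simpa using coeff_derivative (g.comp (C lam + X)) 0
  rw [derivative_comp] at h1
  simp at h1
  rw [← h1, coeff_zero_eq_eval_zero]
  simp [eval_comp]

private lemma compCoeff2 (g : ℂ[X]) (lam : ℂ) :
    (g.comp (C lam + X)).coeff 2 * 2 = (derivative (derivative g)).eval lam := by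
  set H := g.comp (C lam + X) with hH
  have h1 : (derivative H).coeff 1 = H.coeff 2 * (1+1) := by
    simpa using coeff_derivative H 1
  have h2 : (derivative (derivative H)).coeff 0 = (derivative H).coeff 1 * 1 := by
    simpa using coeff_derivative (derivative H) 0
  have h3 : derivative (derivative H) = (derivative (derivative g)).comp (C lam + X) := by
    rw [hH, derivative_comp]
    simp [derivative_comp]
  rw [h3, coeff_zero_eq_eval_zero, mul_one] at h2
  rw [h1] at h2
  rw [show (2:ℂ) = 1+1 by norm_num, ← h2]
  simp [eval_comp]

private lemma coeffL (p c : ℂ) (g : Polynomial ℂ) (n : ℕ) :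
    ((C p * X + C c) * g).coeff (n+1) = p * g.coeff n + c * g.coeff (n+1) := by
  rw [add_mul, coeff_add, mul_assoc, coeff_C_mul, coeff_C_mul, coeff_X_mul]

private lemma coeffR (p lam : ℂ) (H : Polynomial ℂ) (n : ℕ) :
    (C p * (C lam - X) * H).coeff (n+1) = p * (lam * H.coeff (n+1) - H.coeff n) := by
  rw [mul_assoc, coeff_C_mul, sub_mul, coeff_sub, coeff_C_mul, coeff_X_mul]

/-- **Shape of `{L_0 λ L_k}_c` for a 2-cocycle with trivial coefficients (formula (5.12)).**
If `g ∈ ℂ[λ]` satisfies `(pλ+(k+2p)μ)g(λ) − (pμ+(k+2p)λ)g(μ) = p(λ−μ)g(λ+μ)` identically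
(`p ≠ 0`, `k ∈ ℤ≥0`), then `g(λ) = g₀δ_{k,−2p} + g₁λ + g₂δ_{k,−p}λ² + g₃δ_{k,0}λ³`
for some constants `g₀,…,g₃`; in particular `deg g ≤ 3`, and if `k ∉ {0, −p, −2p}` then
`g` is linear with zero constant term. -/
theorem shape_of_g (p : ℂ) (hp : p ≠ 0) (k : ℕ) (g : Polynomial ℂ)
    (h : ∀ lam mu : ℂ,
      (p * lam + ((k : ℂ) + 2 * p) * mu) * g.eval lam -
          (p * mu + ((k : ℂ) + 2 * p) * lam) * g.eval mu =
        p * (lam - mu) * g.eval (lam + mu)) :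
    (∃ g0 g1 g2 g3 : ℂ,
      g = C (if (k : ℂ) = -(2 * p) then g0 else 0) + C g1 * X +
          C (if (k : ℂ) = -p then g2 else 0) * X ^ 2 +
          C (if (k : ℂ) = 0 then g3 else 0) * X ^ 3) ∧
    g.natDegree ≤ 3 ∧
    ((k : ℂ) ≠ 0 → (k : ℂ) ≠ -p → (k : ℂ) ≠ -(2 * p) → ∃ g1 : ℂ, g = C g1 * X) := by
  set q : ℂ := (k:ℂ) + 2*p with hq
  have hLR : ∀ lam : ℂ,
      (C (p*lam) + C q * X) * C (g.eval lam) - (C p * X + C (q*lam)) * g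
        = C p * (C lam - X) * (g.comp (C lam + X)) := by
    intro lam
    apply Polynomial.funext
    intro mu
    simp [eval_comp]
    linear_combination h lam mu
  -- first eval identity (coeff of μ¹)
  have hA : ∀ lam : ℂ, q * g.eval lam - (p * g.coeff 0 + q * lam * g.coeff 1)
      = p * (lam * (derivative g).eval lam - g.eval lam) := by
    intro lam
    have h1 := congrArg (fun P => P.coeff 1) (hLR lam)
    simp only [coeff_sub] at h1
    rw [show (1:ℕ) = 0+1 from rfl, coeffL, coeffR, compCoeff0, compCoeff1] at h1
    have hc : ((C (p*lam) + C q * X) * C (g.eval lam)).coeff (0+1) = q * g.eval lam := by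
      rw [add_mul, coeff_add, mul_assoc, mul_comm X, ← mul_assoc, coeff_mul_C]
      simp
    rw [hc] at h1
    simpa using h1
  -- second eval identity (coeff of μ²), multiplied by 2
  have hB : ∀ lam : ℂ, -(2*(p * g.coeff 1 + q * lam * g.coeff 2))
      = p * (lam * (derivative (derivative g)).eval lam) - 2 * p * (derivative g).eval lam := by
    intro lam
    have h2 := congrArg (fun P => P.coeff 2) (hLR lam)
    simp only [coeff_sub] at h2
    rw [show (2:ℕ) = 1+1 from rfl, coeffL, coeffR, compCoeff1] at h2
    have hc : ((C (p*lam) + C q * X) * C (g.eval lam)).coeff (1+1) = 0 := by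
      rw [add_mul, coeff_add, mul_assoc, mul_comm X, ← mul_assoc, coeff_mul_C]
      simp
    rw [hc] at h2
    have h2' := congrArg (fun z => 2 * z) h2
    have hcc := compCoeff2 g lam
    push_cast at h2' ⊢
    linear_combination h2' + p * lam * hcc
  -- polynomial identities
  have hApoly : C (p+q) * g - C (q * g.coeff 1) * X - C (p * g.coeff 0)
      - C p * (X * derivative g) = 0 := by
    apply Polynomial.funext
    intro lam
    simp
    linear_combination hA lam
  have hBpoly : C p * (X * derivative (derivative g)) - C (2*p) * derivative g
      + C (2*p*g.coeff 1) + C (2*q*g.coeff 2) * X = 0 := by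
    apply Polynomial.funext
    intro lam
    simp
    linear_combination -hB lam
  -- vanishing of high coefficients
  have hz : ∀ n : ℕ, g.coeff (n+4) = 0 := by
    intro n
    have hc := congrArg (fun P => P.coeff (n+3)) hBpoly
    simp only [coeff_add, coeff_sub, coeff_C_mul, coeff_zero, coeff_C, coeff_X] at hc
    rw [show n+3 = (n+2)+1 from rfl, coeff_X_mul, coeff_derivative, coeff_derivative,
      if_neg (by omega : ¬ n+2+1 = 0), if_neg (by omega : ¬ 1 = n+2+1)] at hc
    have hfac : (p * (((n:ℂ)+4) * ((n:ℂ)+1))) * g.coeff (n+4) = 0 := by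
      push_cast at hc ⊢
      linear_combination hc
    have hne : p * (((n:ℂ)+4) * ((n:ℂ)+1)) ≠ 0 := by
      have h4 : ((n:ℂ)+4) ≠ 0 := by
        have : ((n:ℂ)+4) = ((n+4 : ℕ) : ℂ) := by push_cast; ring
        rw [this]
        exact Nat.cast_ne_zero.mpr (by omega)
      have h1 : ((n:ℂ)+1) ≠ 0 := by
        have : ((n:ℂ)+1) = ((n+1 : ℕ) : ℂ) := by push_cast; ring
        rw [this]
        exact Nat.cast_ne_zero.mpr (by omega)
      exact mul_ne_zero hp (mul_ne_zero h4 h1)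
    exact (mul_eq_zero.mp hfac).resolve_left hne
  -- the three coefficient constraints
  have fa0 : ((k:ℂ) + 2*p) * g.coeff 0 = 0 := by
    have hc := congrArg (fun P => P.coeff 0) hApoly
    simp only [coeff_sub, coeff_C_mul, coeff_zero, coeff_C, coeff_X_zero, mul_coeff_zero] at hc
    norm_num at hc
    linear_combination hc
  have fa2 : ((k:ℂ) + p) * g.coeff 2 = 0 := by
    have hc := congrArg (fun P => P.coeff 2) hApoly
    simp only [coeff_sub, coeff_C_mul, coeff_zero, coeff_C, coeff_X] at hc
    rw [show (2:ℕ) = 1+1 from rfl, coeff_X_mul, coeff_derivative,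
      if_neg (by omega : ¬ (1:ℕ)+1 = 0), if_neg (by omega : ¬ (1:ℕ) = 1+1)] at hc
    norm_num at hc
    linear_combination hc
  have fa3 : (k:ℂ) * g.coeff 3 = 0 := by
    have hc := congrArg (fun P => P.coeff 3) hApoly
    simp only [coeff_sub, coeff_C_mul, coeff_zero, coeff_C, coeff_X] at hc
    rw [show (3:ℕ) = 2+1 from rfl, coeff_X_mul, coeff_derivative,
      if_neg (by omega : ¬ (2:ℕ)+1 = 0), if_neg (by omega : ¬ (1:ℕ) = 2+1)] at hc
    norm_num at hc
    linear_combination hc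
  -- representation of g
  have hrep : g = C (g.coeff 0) + C (g.coeff 1) * X + C (g.coeff 2) * X^2
      + C (g.coeff 3) * X^3 := by
    ext n
    simp only [coeff_add, coeff_C_mul, coeff_C, coeff_X, coeff_X_pow]
    rcases n with _|_|_|_|n
    · norm_num
    · norm_num
    · norm_num
    · norm_num
    · have c1 : ¬ (n+1+1+1+1 = 0) := by omega
      have c2 : ¬ (1 = n+1+1+1+1) := by omega
      have c3 : ¬ (n+1+1+1+1 = 2) := by omega
      have c4 : ¬ (n+1+1+1+1 = 3) := by omega
      rw [show n+1+1+1+1 = n+4 from rfl] at *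
      rw [hz n]
      simp [c1, c2, c3, c4]
  refine ⟨⟨g.coeff 0, g.coeff 1, g.coeff 2, g.coeff 3, ?_⟩, ?_, ?_⟩
  · have e0 : (if (k:ℂ) = -(2*p) then g.coeff 0 else 0) = g.coeff 0 := by
      split_ifs with hcond
      · rfl
      · have hne : (k:ℂ) + 2*p ≠ 0 := fun hcontra => hcond (by linear_combination hcontra)
        exact ((mul_eq_zero.mp fa0).resolve_left hne).symm
    have e2 : (if (k:ℂ) = -p then g.coeff 2 else 0) = g.coeff 2 := by
      split_ifs with hcond
      · rfl
      · have hne : (k:ℂ) + p ≠ 0 := fun hcontra => hcond (by linear_combination hcontra)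
        exact ((mul_eq_zero.mp fa2).resolve_left hne).symm
    have e3 : (if (k:ℂ) = 0 then g.coeff 3 else 0) = g.coeff 3 := by
      split_ifs with hcond
      · rfl
      · exact ((mul_eq_zero.mp fa3).resolve_left hcond).symm
    rw [e0, e2, e3]
    exact hrep
  · rw [Polynomial.natDegree_le_iff_coeff_eq_zero]
    intro m hm
    obtain ⟨n, rfl⟩ : ∃ n, m = n + 4 := ⟨m - 4, by omega⟩
    exact hz n
  · intro hk0 hk1 hk2
    refine ⟨g.coeff 1, ?_⟩
    have hne0 : (k:ℂ) + 2*p ≠ 0 := fun hcontra => hk2 (by linear_combination hcontra)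
    have hne2 : (k:ℂ) + p ≠ 0 := fun hcontra => hk1 (by linear_combination hcontra)
    have z0 := (mul_eq_zero.mp fa0).resolve_left hne0
    have z2 := (mul_eq_zero.mp fa2).resolve_left hne2
    have z3 := (mul_eq_zero.mp fa3).resolve_left hk0
    rw [hrep, z0, z2, z3]
    simp
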